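/- arXiv:1108.1124 — 2 statements merged into one kernel-verified Lean document; each statement's English description precedes it below -/
import Mathlib

section
/- Let (P, ≺) be a finite partially ordered set, let π be an ordering of P, and let τ be a terminal ordering reachable from π. If (x,y) is a critical pair in π, then y precedes x in τ; that is, the relative order of x and y is reversed. -/
/-- An ordering of a finite poset `P`: a list of all elements of `P` without repetition. -/
def IsOrdering {P : Type*} (π : List P) : Prop := π.Nodup ∧ ∀ x : P, x ∈ π

/-- A permissible swap: exchange two adjacent elements `a b` with `a ≺ b`. -/
def PermissibleSwap {P : Type*} [PartialOrder P] (π σ : List P) : Prop :=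
  ∃ (l₁ l₂ : List P) (a b : P), a < b ∧ π = l₁ ++ a :: b :: l₂ ∧ σ = l₁ ++ b :: a :: l₂

/-- `σ` is reachable from `π` by a finite (possibly empty) sequence of permissible swaps. -/
def Reachable {P : Type*} [PartialOrder P] (π σ : List P) : Prop :=
  Relation.ReflTransGen PermissibleSwap π σ

/-- An ordering is terminal if no permissible swap applies to it. -/
def Terminal {P : Type*} [PartialOrder P] (π : List P) : Prop :=
  ∀ σ : List P, ¬ PermissibleSwap π σ

/-- `x` precedes `y` in the list `π` (occurs earlier). -/
def Precedes {P : Type*} [DecidableEq P] (π : List P) (x y : P) : Prop :=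
  π.idxOf x < π.idxOf y

/-- `x` and `y` are incomparable: neither `x ≺ y` nor `y ≺ x`. -/
def Incomp {P : Type*} [PartialOrder P] (x y : P) : Prop := ¬ x < y ∧ ¬ y < x

/-- `c` is an `(x,y)`-fence in `π`: a sequence starting at `x`, ending at `y`, whose
elements appear in this order (not necessarily consecutively) in `π`, with consecutive
elements incomparable. -/
def IsFence {P : Type*} [PartialOrder P] (π : List P) (x y : P) (c : List P) : Prop :=
  c.Chain' Incomp ∧ c.Sublist π ∧ c.head? = some x ∧ c.getLast? = some y

/-- There exists an `(x,y)`-fence in `π`. -/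
def HasFence {P : Type*} [PartialOrder P] (π : List P) (x y : P) : Prop :=
  ∃ c : List P, IsFence π x y c

/-- `(x,y)` is a critical pair in `π`: `x ≺ y`, `x` precedes `y` in `π`,
and there is no `(x,y)`-fence in `π`. -/
def Critical {P : Type*} [PartialOrder P] [DecidableEq P] (π : List P) (x y : P) : Prop :=
  x < y ∧ Precedes π x y ∧ ¬ HasFence π x y


section Aux

open List

variable {P : Type*} [PartialOrder P]

private lemma pair_flip {a b : P} {c : List P} (h : c <+ [a, b]) (hne : c ≠ [a, b]) :
    c <+ [b, a] := by
  cases h with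
  | cons _ h' => exact h'.trans (List.sublist_append_left [b] [a])
  | cons_cons _ h' =>
    cases h' with
    | cons _ h'' =>
      obtain rfl := List.sublist_nil.mp h''
      exact List.sublist_append_right [b] [a]
    | cons_cons _ h'' =>
      obtain rfl := List.sublist_nil.mp h''
      exact absurd rfl hne

private lemma sublist_transfer {l₁ l₂ c : List P} {a b : P}
    (h : c <+ l₁ ++ a :: b :: l₂) :
    c <+ l₁ ++ b :: a :: l₂ ∨ ∃ c1 c4, c = c1 ++ a :: b :: c4 := by
  have h' : c <+ l₁ ++ ([a, b] ++ l₂) := h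
  rw [List.sublist_append_iff] at h'
  obtain ⟨d1, d2, rfl, hd1, hd2⟩ := h'
  rw [List.sublist_append_iff] at hd2
  obtain ⟨d3, d4, rfl, hd3, hd4⟩ := hd2
  by_cases hc : d3 = [a, b]
  · subst hc
    exact Or.inr ⟨d1, d4, by simp⟩
  · left
    have h1 : d3 <+ [b, a] := pair_flip hd3 hc
    exact hd1.append (h1.append hd4)

private lemma pair_eq_of_middle {u v a b : P} {c1 c4 : List P}
    (hc : [u, v] = c1 ++ a :: b :: c4) : u = a ∧ v = b := by
  have hl := congrArg List.length hc
  simp [List.length_append] at hl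
  obtain ⟨h1, h2⟩ : c1.length = 0 ∧ c4.length = 0 := by omega
  rw [List.length_eq_zero_iff] at h1 h2
  subst h1; subst h2
  simpa using hc

private lemma fence_transfer {l₁ l₂ : List P} {a b x y : P} (hab : a < b)
    (h : HasFence (l₁ ++ b :: a :: l₂) x y) : HasFence (l₁ ++ a :: b :: l₂) x y := by
  obtain ⟨c, hch, hsub, hh, hl⟩ := h
  rcases sublist_transfer hsub with h' | ⟨c1, c4, rfl⟩
  · exact ⟨c, hch, h', hh, hl⟩
  · exfalso
    have hinf : [b, a] <:+: c1 ++ b :: a :: c4 := ⟨c1, c4, by simp⟩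
    have : Incomp b a := List.isChain_pair.mp (hch.infix hinf)
    exact this.2 hab

private lemma step_inv {x y : P} (hxy : x < y) {σ σ' : List P} (hs : PermissibleSwap σ σ')
    (hJ : [y, x] <+ σ ∨ ([x, y] <+ σ ∧ ¬ HasFence σ x y)) :
    [y, x] <+ σ' ∨ ([x, y] <+ σ' ∧ ¬ HasFence σ' x y) := by
  obtain ⟨l₁, l₂, a, b, hab, rfl, rfl⟩ := hs
  rcases hJ with h | ⟨hp, hf⟩
  · left
    rcases sublist_transfer h with h' | ⟨c1, c4, hc⟩
    · exact h'
    · obtain ⟨rfl, rfl⟩ := pair_eq_of_middle hc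
      exact absurd hab (lt_asymm hxy)
  · by_cases hcase : x = a ∧ y = b
    · obtain ⟨rfl, rfl⟩ := hcase
      left
      have h1 : [y, x] <+ y :: x :: l₂ :=
        ((List.nil_sublist l₂).cons₂ x).cons₂ y
      exact h1.trans (List.sublist_append_right l₁ _)
    · right
      refine ⟨?_, fun hf' => hf (fence_transfer hab hf')⟩
      rcases sublist_transfer hp with h' | ⟨c1, c4, hc⟩
      · exact h'
      · exact absurd (pair_eq_of_middle hc) hcase

private lemma reach_inv {x y : P} (hxy : x < y) {π τ : List P} (h : Reachable π τ)
    (hJ : [y, x] <+ π ∨ ([x, y] <+ π ∧ ¬ HasFence π x y)) :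
    [y, x] <+ τ ∨ ([x, y] <+ τ ∧ ¬ HasFence τ x y) := by
  induction h with
  | refl => exact hJ
  | tail _ hstep ih => exact step_inv hxy hstep ih

private lemma reach_perm {π τ : List P} (h : Reachable π τ) : π.Perm τ := by
  induction h with
  | refl => exact List.Perm.refl _
  | tail _ hstep ih =>
    obtain ⟨l₁, l₂, a, b, _, rfl, rfl⟩ := hstep
    exact ih.trans (List.Perm.append_left l₁ (List.Perm.swap b a l₂))

private lemma terminal_chain' : ∀ (L : List P), Terminal L → L.Chain' (fun p q => ¬ p < q)
  | [] , _ => List.isChain_nil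
  | [_], _ => List.isChain_singleton _
  | a :: b :: t, h => by
    simp only [List.Chain', List.isChain_cons_cons]
    constructor
    · intro hab
      exact h (b :: a :: t) ⟨[], t, a, b, hab, rfl, rfl⟩
    · refine terminal_chain' (b :: t) ?_
      intro σ hσ
      obtain ⟨l₁, l₂, p, q, hpq, h1, h2⟩ := hσ
      exact h (a :: l₁ ++ q :: p :: l₂) ⟨a :: l₁, l₂, p, q, hpq, by rw [h1]; rfl, rfl⟩

private lemma walk : ∀ (c : List P), c.Chain' Incomp →
    ∀ u z, c.head? = some z → z < u →
    (∀ w, c.getLast? = some w → ¬ w < u) →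
    ∃ d, d <+ c ∧ (u :: d).Chain' Incomp ∧ d.getLast? = c.getLast?
  | [], _, u, z, hh, _, _ => by simp at hh
  | [z'], hc, u, z, hh, hzu, hlast => by
    obtain rfl : z' = z := by simpa using hh
    exact absurd hzu (hlast z' rfl)
  | z' :: z2 :: r, hc, u, z, hh, hzu, hlast => by
    obtain rfl : z' = z := by simpa using hh
    simp only [List.Chain', List.isChain_cons_cons] at hc
    obtain ⟨hzz2, hc2⟩ := hc
    have hlast2 : ∀ w, (z2 :: r).getLast? = some w → ¬ w < u := by
      intro w hw
      exact hlast w (by rw [List.getLast?_cons_cons]; exact hw)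
    by_cases hz2 : z2 < u
    · obtain ⟨d, hd1, hd2, hd3⟩ := walk (z2 :: r) hc2 u z2 rfl hz2 hlast2
      exact ⟨d, hd1.trans (List.sublist_cons_self z' _), hd2,
        by rw [List.getLast?_cons_cons]; exact hd3⟩
    · refine ⟨z2 :: r, List.sublist_cons_self z' _, ?_, (List.getLast?_cons_cons (a := z')).symm⟩
      simp only [List.Chain', List.isChain_cons_cons]
      refine ⟨⟨fun huz2 => hzz2.1 (lt_trans hzu huz2), hz2⟩, hc2⟩

private lemma exists_fence : ∀ (B : List P) (u v : P),
    (u :: B).Chain' (fun p q => ¬ p < q) → v ∈ B → ¬ v < u →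
    ∃ c, IsFence (u :: B) u v c
  | [], _, _, _, hv, _ => by simp at hv
  | w :: B', u, v, hch, hv, hvu => by
    simp only [List.Chain', List.isChain_cons_cons] at hch
    obtain ⟨huw, hch2⟩ := hch
    by_cases hvw : v = w
    · subst hvw
      refine ⟨[u, v], List.isChain_pair.mpr ⟨huw, hvu⟩, ?_, rfl, rfl⟩
      exact ((List.nil_sublist B').cons₂ v).cons₂ u
    · have hv' : v ∈ B' := by
        rcases List.mem_cons.mp hv with h | h
        · exact absurd h hvw
        · exact h
      by_cases hvw2 : v < w
      · refine ⟨[u, v], List.isChain_pair.mpr ⟨fun huv => huw (lt_trans huv hvw2), hvu⟩, ?_, rfl, rfl⟩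
        exact (List.singleton_sublist.mpr (List.mem_cons_of_mem w hv')).cons₂ u
      · obtain ⟨c, hcch, hcsub, hchead, hclast⟩ := exists_fence B' w v hch2 hv' hvw2
        by_cases hwu : w < u
        · have hlast2 : ∀ w', c.getLast? = some w' → ¬ w' < u := by
            intro w' hw'
            rw [hclast] at hw'
            obtain rfl : v = w' := by simpa using hw'
            exact hvu
          obtain ⟨d, hd1, hd2, hd3⟩ := walk c hcch u w hchead hwu hlast2
          rw [hclast] at hd3
          cases d with
          | nil => simp at hd3
          | cons e d' =>
            refine ⟨u :: e :: d', hd2, (hd1.trans hcsub).cons₂ u, rfl, ?_⟩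
            rw [List.getLast?_cons_cons]
            exact hd3
        · -- u :: c
          obtain ⟨c', rfl⟩ : ∃ c', c = w :: c' := by
            cases c with
            | nil => simp at hchead
            | cons e c' =>
              obtain rfl : e = w := by simpa using hchead
              exact ⟨c', rfl⟩
          refine ⟨u :: w :: c', ?_, (hcsub.cons₂ u), rfl, ?_⟩
          · simp only [List.Chain', List.isChain_cons_cons]
            exact ⟨⟨huw, hwu⟩, hcch⟩
          · rw [List.getLast?_cons_cons]
            exact hclast

end Aux


section Aux2

open List

variable {P : Type*} [PartialOrder P] [DecidableEq P]

private lemma sublist_of_precedes :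
    ∀ (σ : List P) (x y : P), y ∈ σ → Precedes σ x y → [x, y] <+ σ
  | [], x, y, hy, _ => by simp at hy
  | a :: t, x, y, hy, hp => by
    simp only [Precedes] at hp
    by_cases hax : a = x
    · subst hax
      have hya : y ≠ a := by
        intro h
        subst h
        exact lt_irrefl _ hp
      have hyt : y ∈ t := by
        rcases List.mem_cons.mp hy with h | h
        · exact absurd h hya
        · exact h
      exact (List.singleton_sublist.mpr hyt).cons₂ a
    · have hay : a ≠ y := by
        intro h
        subst h
        rw [List.idxOf_cons_self] at hp
        exact Nat.not_lt_zero _ hp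
      rw [List.idxOf_cons_ne t hax, List.idxOf_cons_ne t hay] at hp
      have hyt : y ∈ t := by
        rcases List.mem_cons.mp hy with h | h
        · exact absurd h.symm hay
        · exact h
      exact (sublist_of_precedes t x y hyt (Nat.succ_lt_succ_iff.mp hp)).cons a

private lemma precedes_of_sublist :
    ∀ (σ : List P) (x y : P), σ.Nodup → [x, y] <+ σ → Precedes σ x y
  | [], x, y, _, h => by simp at h
  | a :: t, x, y, hnd, h => by
    rw [List.nodup_cons] at hnd
    cases h with
    | cons _ h' =>
      have hx : x ∈ t := List.Sublist.mem (by simp) h'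
      have hy : y ∈ t := List.Sublist.mem (by simp) h'
      have hax : a ≠ x := fun h0 => hnd.1 (h0 ▸ hx)
      have hay : a ≠ y := fun h0 => hnd.1 (h0 ▸ hy)
      have ih := precedes_of_sublist t x y hnd.2 h'
      simp only [Precedes] at ih ⊢
      rw [List.idxOf_cons_ne t hax, List.idxOf_cons_ne t hay]
      omega
    | cons_cons _ h' =>
      have hy : y ∈ t := List.singleton_sublist.mp h'
      have hxy : a ≠ y := fun h0 => hnd.1 (h0 ▸ hy)
      simp only [Precedes]
      rw [List.idxOf_cons_self, List.idxOf_cons_ne t hxy]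
      exact Nat.succ_pos _

private lemma pair_decomp {x y : P} : ∀ {τ : List P}, [x, y] <+ τ →
    ∃ A B, τ = A ++ x :: B ∧ y ∈ B
  | [], h => by simp at h
  | a :: t, h => by
    cases h with
    | cons _ h' =>
      obtain ⟨A, B, rfl, hy⟩ := pair_decomp h'
      exact ⟨a :: A, B, rfl, hy⟩
    | cons_cons _ h' =>
      exact ⟨[], t, rfl, List.singleton_sublist.mp h'⟩

end Aux2

/-- If `(x,y)` is a critical pair in `π` and `τ` is a terminal ordering
reachable from `π`, then `y` precedes `x` in `τ`. -/
theorem stmt_7 {P : Type*} [PartialOrder P] [DecidableEq P] (π : List P)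
    (hπ : IsOrdering π) (τ : List P) (hreach : Reachable π τ) (hterm : Terminal τ)
    (x y : P) (hcrit : Critical π x y) :
    Precedes τ y x := by
  obtain ⟨hxy, hprec, hnof⟩ := hcrit
  have hyx : ¬ y < x := lt_asymm hxy
  have hpair : [x, y].Sublist π := sublist_of_precedes π x y (hπ.2 y) hprec
  have hJ := reach_inv hxy hreach (Or.inr ⟨hpair, hnof⟩)
  rcases hJ with h | ⟨hp, hf⟩
  · exact precedes_of_sublist τ y x ((reach_perm hreach).nodup hπ.1) h
  · exfalso
    obtain ⟨A, B, rfl, hyB⟩ := pair_decomp hp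
    have hch := terminal_chain' _ hterm
    have hch2 : (x :: B).Chain' (fun p q => ¬ p < q) := hch.suffix ⟨A, rfl⟩
    obtain ⟨c, hc⟩ := exists_fence B x y hch2 hyB hyx
    obtain ⟨hc1, hc2, hc3, hc4⟩ := hc
    exact hf ⟨c, hc1, hc2.trans (List.sublist_append_right A _), hc3, hc4⟩
end

section
/- Let (P, ≺) be a finite partially ordered set and let π be an ordering of P. Then the length of any maximal sequence of permissible swaps starting from π equals the number of critical pairs in π. -/
open List

section Aux

variable {P : Type*} [PartialOrder P]

lemma swap_perm {π σ : List P} (h : PermissibleSwap π σ) : π.Perm σ := by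
  obtain ⟨l₁, l₂, a, b, _, rfl, rfl⟩ := h
  exact List.Perm.append_left _ (List.Perm.swap a b l₂).symm

lemma terminal_chain'_s11 {π : List P} (h : Terminal π) :
    π.Chain' (fun a b => ¬ a < b) := by
  unfold List.Chain'; rw [List.isChain_iff_getElem]
  intro i hi hlt
  have hi1 : i + 1 < π.length := by omega
  have hi0 : i < π.length := by omega
  apply h (π.take i ++ π[i+1] :: π[i] :: π.drop (i+2))
  refine ⟨π.take i, π.drop (i+2), π[i], π[i+1], by simpa using hlt, ?_, rfl⟩
  conv_lhs => rw [← List.take_append_drop i π, ← List.getElem_cons_drop hi0,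
    ← List.getElem_cons_drop hi1]

lemma walk_s11 (x : P) : ∀ (c : List P), c.Chain' Incomp → ∀ (hne : c ≠ []),
    c.head hne < x →
    c.getLast hne < x ∨ ∃ (c' : List P) (h : c' ≠ []), c' <:+ c ∧ Incomp x (c'.head h)
  | [z], _, hne, hx => Or.inl (by simpa using hx)
  | z :: w :: rest, hc, hne, hx => by
    have hzw : Incomp z w := (List.isChain_cons_cons.mp hc).1
    have hc' : (w :: rest).Chain' Incomp := (List.isChain_cons_cons.mp hc).2
    have hzx : z < x := by simpa using hx
    by_cases h1 : w < x
    · rcases walk_s11 x (w :: rest) hc' (by simp) (by simpa using h1) with h | ⟨c', h, hs, hi⟩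
      · left
        rwa [List.getLast_cons (by simp : (w :: rest) ≠ [])]
      · exact Or.inr ⟨c', h, hs.trans (List.suffix_cons z (w :: rest)), hi⟩
    · by_cases h2 : x < w
      · exact absurd (hzx.trans h2) hzw.1
      · exact Or.inr ⟨w :: rest, by simp, List.suffix_cons z (w :: rest), ⟨h2, h1⟩⟩

lemma fence_of_chain' {π : List P} (hnd : π.Nodup)
    (hch : π.Chain' (fun a b => ¬ a < b)) :
    ∀ (d i j : ℕ) (hj : j < π.length) (hij : i < j), j = i + d →
    π[i]'(by omega) < π[j] →
    ∃ c : List P, c.Chain' Incomp ∧ c <+ π.drop i ∧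
      c.head? = some (π[i]'(by omega)) ∧ c.getLast? = some (π[j]) := by
  intro d
  induction d with
  | zero => intro i j hj hij hje; omega
  | succ d ih =>
    intro i j hj hij hje hlt
    have hi : i < π.length := by omega
    have hadj : ∀ (k : ℕ) (hk : k + 1 < π.length), ¬ π[k] < π[k+1] := by
      intro k hk
      have := List.isChain_iff_getElem.mp hch k (by omega)
      simpa using this
    rcases Nat.eq_or_lt_of_le (Nat.succ_le_of_lt hij) with hd | hd
    · -- j = i + 1 : contradiction with chain'
      obtain rfl : j = i + 1 := by omega
      exact absurd hlt (hadj i hj)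
    · have hi1 : i + 1 < π.length := by omega
      have hxu : ¬ π[i] < π[i+1] := hadj i hi1
      by_cases hux : π[i+1] < π[i]
      · -- x > u : recurse from i+1 and walk
        have huy : π[i+1] < π[j] := hux.trans hlt
        obtain ⟨c, hc, hsub, hh, hl⟩ := ih (i+1) j hj (by omega) (by omega) huy
        have hcne : c ≠ [] := by rintro rfl; simp at hh
        have hhead : c.head hcne = π[i+1] := by
          rw [List.head?_eq_head hcne] at hh; exact Option.some_injective _ hh
        have hlast : c.getLast hcne = π[j] := by
          rw [List.getLast?_eq_getLast hcne] at hl; exact Option.some_injective _ hl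
        rcases walk_s11 (π[i]) c hc hcne (by rw [hhead]; exact hux) with hgt | ⟨c', hne', hsuf, hinc⟩
        · rw [hlast] at hgt; exact absurd hlt (lt_asymm hgt)
        · refine ⟨π[i] :: c', ?_, ?_, rfl, ?_⟩
          · unfold List.Chain'; rw [List.isChain_cons]
            refine ⟨?_, hc.suffix hsuf⟩
            intro z hz
            rw [List.head?_eq_head hne'] at hz
            obtain rfl : c'.head hne' = z := Option.some_injective _ hz
            exact hinc
          · rw [← List.getElem_cons_drop hi]
            exact List.Sublist.cons_cons _ ((hsuf.sublist).trans hsub)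
          · rw [List.getLast?_cons]
            obtain ⟨t, rfl⟩ := hsuf
            rw [List.getLast?_append_of_ne_nil t hne'] at hl
            simpa [List.getLast?_eq_getLast hne'] using hl
      · -- x ∥ u
        have hincxu : Incomp (π[i]) (π[i+1]) := ⟨hxu, hux⟩
        by_cases huy : π[i+1] < π[j]
        · obtain ⟨c, hc, hsub, hh, hl⟩ := ih (i+1) j hj (by omega) (by omega) huy
          refine ⟨π[i] :: c, ?_, ?_, rfl, ?_⟩
          · unfold List.Chain'; rw [List.isChain_cons]
            refine ⟨?_, hc⟩
            intro z hz
            rw [hh] at hz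
            obtain rfl : π[i+1] = z := Option.some_injective _ hz
            exact hincxu
          · rw [← List.getElem_cons_drop hi]
            exact List.Sublist.cons_cons _ hsub
          · have hcne : c ≠ [] := by rintro rfl; simp at hh
            rw [List.getLast?_cons, List.getLast?_eq_getLast hcne] at *
            simpa using hl
        · by_cases hyu : π[j] < π[i+1]
          · exact absurd (hlt.trans hyu) hxu
          · -- u ∥ y : fence [x, u, y]
            have hincuy : Incomp (π[i+1]) (π[j]) := ⟨huy, hyu⟩
            refine ⟨[π[i], π[i+1], π[j]], ?_, ?_, rfl, rfl⟩
            · simp [List.Chain', List.isChain_cons_cons, hincxu, hincuy]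
            · rw [← List.getElem_cons_drop hi, ← List.getElem_cons_drop hi1]
              refine List.Sublist.cons_cons _ (List.Sublist.cons_cons _ ?_)
              rw [List.singleton_sublist]
              have hj2 : j - (i+2) < (π.drop (i+2)).length := by
                rw [List.length_drop]; omega
              have : (π.drop (i+2))[j - (i+2)] = π[j] := by
                rw [List.getElem_drop]; congr 1; omega
              exact this ▸ List.getElem_mem hj2

lemma terminal_no_critical [DecidableEq P] {π : List P} (hπ : IsOrdering π)
    (ht : Terminal π) (x y : P) : ¬ Critical π x y := by
  rintro ⟨hxy, hprec, hnf⟩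
  apply hnf
  have hx := hπ.2 x
  have hy := hπ.2 y
  have hi : π.idxOf x < π.length := List.idxOf_lt_length_iff.mpr hx
  have hj : π.idxOf y < π.length := List.idxOf_lt_length_iff.mpr hy
  have hgi : π[π.idxOf x] = x := List.getElem_idxOf hi
  have hgj : π[π.idxOf y] = y := List.getElem_idxOf hj
  obtain ⟨c, h1, h2, h3, h4⟩ := fence_of_chain' hπ.1 (terminal_chain'_s11 ht)
    (π.idxOf y - π.idxOf x) (π.idxOf x) (π.idxOf y) hj hprec (by
      have : π.idxOf x < π.idxOf y := hprec
      omega) (by rw [hgi, hgj]; exact hxy)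
  refine ⟨c, h1, h2.trans (List.drop_sublist _ π), ?_, ?_⟩
  · rw [hgi] at h3; exact h3
  · rw [hgj] at h4; exact h4

lemma not_both_mem {l₁ l₂ c : List P} {u v : P} (hnd : (l₁ ++ u :: v :: l₂).Nodup)
    (hcomp : ¬ Incomp u v) (hc : c.Chain' Incomp) (hsub : c <+ l₁ ++ u :: v :: l₂) :
    u ∉ c ∨ v ∉ c := by
  by_contra h
  push_neg at h
  obtain ⟨hu, hv⟩ := h
  have hul : u ∉ l₁ := by
    intro hm
    exact (List.disjoint_of_nodup_append hnd) hm (by simp)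
  have hvl : v ∉ l₁ := by
    intro hm
    exact (List.disjoint_of_nodup_append hnd) hm (by simp)
  have hnd2 : (u :: v :: l₂).Nodup := (List.nodup_append.mp hnd).2.1
  have huv : u ≠ v := by simp at hnd2; tauto
  have hul2 : u ∉ l₂ := by simp at hnd2; tauto
  have hvl2 : v ∉ l₂ := by simp at hnd2; tauto
  obtain ⟨c1, c2, rfl, h1, h2⟩ := List.sublist_append_iff.mp hsub
  have hu2 : u ∈ c2 := by
    rcases List.mem_append.mp hu with h | h
    · exact absurd (h1.subset h) hul
    · exact h
  have hv2 : v ∈ c2 := by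
    rcases List.mem_append.mp hv with h | h
    · exact absurd (h1.subset h) hvl
    · exact h
  rcases List.sublist_cons_iff.mp h2 with h3 | ⟨r, rfl, h3⟩
  · rcases List.mem_cons.mp (h3.subset hu2) with h | h
    · exact huv h
    · exact hul2 h
  · have hvr : v ∈ r := by
      rcases List.mem_cons.mp hv2 with h | h
      · exact absurd h.symm huv
      · exact h
    rcases List.sublist_cons_iff.mp h3 with h4 | ⟨r', rfl, h4⟩
    · exact hvl2 (h4.subset hvr)
    · have : (u :: v :: r') <:+ c1 ++ u :: v :: r' := List.suffix_append _ _
      have hch := hc.suffix this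
      rw [List.isChain_cons_cons] at hch
      exact hcomp hch.1

lemma sublist_swap_of_not_mem {l₁ l₂ c : List P} {u v : P}
    (hsub : c <+ l₁ ++ u :: v :: l₂) (h : u ∉ c ∨ v ∉ c) :
    c <+ l₁ ++ v :: u :: l₂ := by
  obtain ⟨c1, c2, rfl, h1, h2⟩ := List.sublist_append_iff.mp hsub
  refine List.Sublist.append h1 ?_
  have hmem : ∀ z, z ∈ c2 → z ∈ c1 ++ c2 := fun z hz => List.mem_append.mpr (Or.inr hz)
  rcases h with h | h
  · -- u ∉ c2
    have hu : u ∉ c2 := fun hm => h (hmem u hm)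
    rcases List.sublist_cons_iff.mp h2 with h3 | ⟨r, rfl, h3⟩
    · exact h3.trans (List.Sublist.cons_cons v (List.sublist_cons_self u l₂))
    · exact absurd (by simp : u ∈ u :: r) hu
  · -- v ∉ c2
    have hv : v ∉ c2 := fun hm => h (hmem v hm)
    rcases List.sublist_cons_iff.mp h2 with h3 | ⟨r, rfl, h3⟩
    · rcases List.sublist_cons_iff.mp h3 with h4 | ⟨r', rfl, h4⟩
      · exact h4.trans ((List.sublist_cons_self u l₂).trans (List.sublist_cons_self v _))
      · exact absurd (by simp : v ∈ v :: r') hv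
    · have hvr : v ∉ r := fun hm => hv (List.mem_cons_of_mem u hm)
      rcases List.sublist_cons_iff.mp h3 with h4 | ⟨r', rfl, h4⟩
      · exact (List.Sublist.cons_cons u h4).trans (List.sublist_cons_self v _)
      · exact absurd (by simp : v ∈ v :: r') hvr

lemma hasFence_swap {l₁ l₂ : List P} {u v x y : P} (hnd : (l₁ ++ u :: v :: l₂).Nodup)
    (hcomp : ¬ Incomp u v) (h : HasFence (l₁ ++ u :: v :: l₂) x y) :
    HasFence (l₁ ++ v :: u :: l₂) x y := by
  obtain ⟨c, hc, hsub, hh, hl⟩ := h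
  exact ⟨c, hc, sublist_swap_of_not_mem hsub (not_both_mem hnd hcomp hc hsub), hh, hl⟩

lemma no_fence_adj {l₁ l₂ : List P} {a b : P} (hnd : (l₁ ++ a :: b :: l₂).Nodup)
    (hcomp : ¬ Incomp a b) : ¬ HasFence (l₁ ++ a :: b :: l₂) a b := by
  rintro ⟨c, hc, hsub, hh, hl⟩
  have ha : a ∈ c := List.mem_of_mem_head? (hh ▸ rfl)
  have hb : b ∈ c := List.mem_of_mem_getLast? (hl ▸ rfl)
  rcases not_both_mem hnd hcomp hc hsub with h | h
  · exact h ha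
  · exact h hb

variable [DecidableEq P]

lemma critical_ab {l₁ l₂ : List P} {a b : P} (hab : a < b)
    (hnd : (l₁ ++ a :: b :: l₂).Nodup) : Critical (l₁ ++ a :: b :: l₂) a b := by
  have hanl : a ∉ l₁ := fun hm => (List.disjoint_of_nodup_append hnd) hm (by simp)
  have hbnl : b ∉ l₁ := fun hm => (List.disjoint_of_nodup_append hnd) hm (by simp)
  have hne : a ≠ b := ne_of_lt hab
  refine ⟨hab, ?_, no_fence_adj hnd (fun h => h.1 hab)⟩
  unfold Precedes
  rw [List.idxOf_append_of_notMem hanl, List.idxOf_append_of_notMem hbnl,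
    List.idxOf_cons_self, List.idxOf_cons_ne _ hne, List.idxOf_cons_self]
  omega

lemma critical_swap {l₁ l₂ : List P} {a b : P} (hab : a < b)
    (hnd : (l₁ ++ a :: b :: l₂).Nodup) (hmem : ∀ z : P, z ∈ l₁ ++ a :: b :: l₂) :
    {p : P × P | Critical (l₁ ++ b :: a :: l₂) p.1 p.2}
      = {p : P × P | Critical (l₁ ++ a :: b :: l₂) p.1 p.2} \ {(a, b)} := by
  have hperm : (l₁ ++ a :: b :: l₂).Perm (l₁ ++ b :: a :: l₂) :=
    List.Perm.append_left _ (List.Perm.swap a b l₂).symm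
  have hnd' : (l₁ ++ b :: a :: l₂).Nodup := hperm.nodup_iff.mp hnd
  have hanl : a ∉ l₁ := fun hm => (List.disjoint_of_nodup_append hnd) hm (by simp)
  have hbnl : b ∉ l₁ := fun hm => (List.disjoint_of_nodup_append hnd) hm (by simp)
  have hne : a ≠ b := ne_of_lt hab
  set L := l₁.length with hL
  have fa : (l₁ ++ a :: b :: l₂).idxOf a = L := by
    rw [List.idxOf_append_of_notMem hanl, List.idxOf_cons_self]
    omega
  have fb : (l₁ ++ a :: b :: l₂).idxOf b = L + 1 := by
    rw [List.idxOf_append_of_notMem hbnl, List.idxOf_cons_ne _ hne,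
      List.idxOf_cons_self]
  have ga : (l₁ ++ b :: a :: l₂).idxOf a = L + 1 := by
    rw [List.idxOf_append_of_notMem hanl, List.idxOf_cons_ne _ hne.symm,
      List.idxOf_cons_self]
  have gb : (l₁ ++ b :: a :: l₂).idxOf b = L := by
    rw [List.idxOf_append_of_notMem hbnl, List.idxOf_cons_self]
    omega
  have hother : ∀ z : P, z ≠ a → z ≠ b →
      (l₁ ++ b :: a :: l₂).idxOf z = (l₁ ++ a :: b :: l₂).idxOf z ∧
      (l₁ ++ a :: b :: l₂).idxOf z ≠ L ∧ (l₁ ++ a :: b :: l₂).idxOf z ≠ L + 1 := by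
    intro z hza hzb
    by_cases hz : z ∈ l₁
    · have hlt : (l₁ ++ a :: b :: l₂).idxOf z < L := by
        rw [List.idxOf_append_of_mem hz]
        exact List.idxOf_lt_length_iff.mpr hz
      refine ⟨?_, by omega, by omega⟩
      rw [List.idxOf_append_of_mem hz, List.idxOf_append_of_mem hz]
    · have e1 : (l₁ ++ a :: b :: l₂).idxOf z = L + ((l₂.idxOf z) + 1 + 1) := by
        rw [List.idxOf_append_of_notMem hz, List.idxOf_cons_ne _ hza.symm,
          List.idxOf_cons_ne _ hzb.symm]
      have e2 : (l₁ ++ b :: a :: l₂).idxOf z = L + ((l₂.idxOf z) + 1 + 1) := by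
        rw [List.idxOf_append_of_notMem hz, List.idxOf_cons_ne _ hzb.symm,
          List.idxOf_cons_ne _ hza.symm]
      exact ⟨by omega, by omega, by omega⟩
  have hfence : ∀ x y : P, HasFence (l₁ ++ b :: a :: l₂) x y ↔ HasFence (l₁ ++ a :: b :: l₂) x y :=
    fun x y => ⟨fun h => hasFence_swap hnd' (fun h' => h'.2 hab) h,
      fun h => hasFence_swap hnd (fun h' => h'.1 hab) h⟩
  ext ⟨x, y⟩
  simp only [Set.mem_setOf_eq, Set.mem_diff, Set.mem_singleton_iff, Prod.mk.injEq, not_and]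
  by_cases hcase1 : x = a ∧ y = b
  · obtain ⟨rfl, rfl⟩ := hcase1
    constructor
    · rintro ⟨-, hp, -⟩
      exfalso
      unfold Precedes at hp
      rw [ga, gb] at hp
      omega
    · rintro ⟨-, h⟩
      exact absurd rfl (h rfl)
  · by_cases hcase2 : x = b ∧ y = a
    · obtain ⟨rfl, rfl⟩ := hcase2
      constructor
      · rintro ⟨h, -, -⟩; exact absurd h (lt_asymm hab)
      · rintro ⟨⟨h, -, -⟩, -⟩; exact absurd h (lt_asymm hab)
    · have hp : Precedes (l₁ ++ b :: a :: l₂) x y ↔ Precedes (l₁ ++ a :: b :: l₂) x y := by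
        unfold Precedes
        have hfacts : ∀ z : P, z = a ∨ z = b ∨ (z ≠ a ∧ z ≠ b) := by tauto
        rcases hfacts x with rfl | rfl | ⟨hxa, hxb⟩ <;>
          rcases hfacts y with rfl | rfl | ⟨hya, hyb⟩
        · rw [ga, fa]
          omega
        · exact absurd ⟨rfl, rfl⟩ hcase1
        · obtain ⟨e1, e2, e3⟩ := hother y hya hyb
          rw [ga, fa, e1]
          omega
        · exact absurd ⟨rfl, rfl⟩ hcase2
        · rw [gb, fb]
          omega
        · obtain ⟨e1, e2, e3⟩ := hother y hya hyb
          rw [gb, fb, e1]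
          omega
        · obtain ⟨e1, e2, e3⟩ := hother x hxa hxb
          rw [ga, fa, e1]
          omega
        · obtain ⟨e1, e2, e3⟩ := hother x hxa hxb
          rw [gb, fb, e1]
          omega
        · obtain ⟨e1, _, _⟩ := hother x hxa hxb
          obtain ⟨e1', _, _⟩ := hother y hya hyb
          rw [e1, e1']
      unfold Critical
      rw [hp, hfence x y]
      constructor
      · rintro ⟨h1, h2, h3⟩
        exact ⟨⟨h1, h2, h3⟩, fun hxa hyb => hcase1 ⟨hxa, hyb⟩⟩
      · rintro ⟨⟨h1, h2, h3⟩, -⟩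
        exact ⟨h1, h2, h3⟩

lemma crit_finite {π : List P} (hπ : IsOrdering π) :
    {p : P × P | Critical π p.1 p.2}.Finite := by
  have : Finite P := Finite.of_surjective (fun i : Fin π.length => π.get i)
    (fun x => by
      obtain ⟨n, hn⟩ := List.mem_iff_get.mp (hπ.2 x)
      exact ⟨n, hn⟩)
  exact Set.toFinite _

end Aux

/-- The length of any maximal sequence of permissible swaps starting from
`π` equals the number of critical pairs in `π`. -/
theorem stmt_11 {P : Type*} [PartialOrder P] [DecidableEq P] (π : List P)
    (hπ : IsOrdering π) (s : ℕ → List P) (m : ℕ)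
    (hs0 : s 0 = π) (hswap : ∀ i < m, PermissibleSwap (s i) (s (i + 1)))
    (hterm : Terminal (s m)) :
    m = {p : P × P | Critical π p.1 p.2}.ncard := by
  induction m generalizing π s with
  | zero =>
    have hempty : {p : P × P | Critical π p.1 p.2} = ∅ := by
      ext ⟨x, y⟩
      simp only [Set.mem_setOf_eq, Set.mem_empty_iff_false, iff_false]
      exact terminal_no_critical hπ (hs0 ▸ hterm) x y
    rw [hempty, Set.ncard_empty]
  | succ m ih =>
    have h0 := hswap 0 (Nat.succ_pos m)
    rw [hs0] at h0
    obtain ⟨l₁, l₂, a, b, hab, hπeq, hσeq⟩ := h0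
    have hperm : π.Perm (s 1) := swap_perm ⟨l₁, l₂, a, b, hab, hπeq, hσeq⟩
    have hord1 : IsOrdering (s 1) :=
      ⟨hperm.nodup_iff.mp hπ.1, fun x => hperm.mem_iff.mp (hπ.2 x)⟩
    have hm : m = {p : P × P | Critical (s 1) p.1 p.2}.ncard :=
      ih (s 1) hord1 (fun i => s (i + 1)) rfl (fun i hi => hswap (i + 1) (by omega)) hterm
    rw [hπeq] at hπ
    rw [hσeq] at hm
    rw [critical_swap hab hπ.1 hπ.2] at hm
    have hmem : (a, b) ∈ {p : P × P | Critical (l₁ ++ a :: b :: l₂) p.1 p.2} :=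
      critical_ab hab hπ.1
    have hfin : {p : P × P | Critical (l₁ ++ a :: b :: l₂) p.1 p.2}.Finite :=
      crit_finite hπ
    rw [hπeq, hm]
    exact Set.ncard_diff_singleton_add_one hmem hfin
end
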